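/- arXiv:2604.16991 — 2 statements merged into one kernel-verified Lean document; each statement's English description precedes it below -/
import Mathlib

section
/- Let A_cl, P ∈ ℝ^{n×n} with P symmetric positive definite and P ⪰ I, and suppose A_cl P A_clᵀ − P + I ⪯ 0. Then A_clᵀ P⁻¹ A_cl − P⁻¹ ≺ 0 (negative definite). -/
open Matrix

private lemma psd_smul {n : ℕ} {M : Matrix (Fin n) (Fin n) ℝ} (hM : M.PosSemidef)
    {c : ℝ} (hc : 0 ≤ c) : (c • M).PosSemidef := by
  refine posSemidef_iff_dotProduct_mulVec.mpr ⟨?_, fun x => ?_⟩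
  · show _ = _
    rw [conjTranspose_smul, star_trivial, hM.1]
  · rw [smul_mulVec, dotProduct_smul]
    exact mul_nonneg hc (hM.dotProduct_mulVec_nonneg x)

private lemma pd_smul {n : ℕ} {M : Matrix (Fin n) (Fin n) ℝ} (hM : M.PosDef)
    {c : ℝ} (hc : 0 < c) : (c • M).PosDef := by
  refine posDef_iff_dotProduct_mulVec.mpr ⟨?_, fun x hx => ?_⟩
  · show _ = _
    rw [conjTranspose_smul, star_trivial, hM.1]
  · rw [smul_mulVec, dotProduct_smul]
    exact mul_pos hc (hM.dotProduct_mulVec_pos hx)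

private lemma quad_bound {n : ℕ} (P : Matrix (Fin n) (Fin n) ℝ) (x : Fin n → ℝ) :
    x ⬝ᵥ P *ᵥ x ≤ (∑ i, ∑ j, |P i j|) * (x ⬝ᵥ x) := by
  have hS : ∀ i, x i ^ 2 ≤ x ⬝ᵥ x := by
    intro i
    have : x ⬝ᵥ x = ∑ k, x k ^ 2 := by
      simp [dotProduct, sq]
    rw [this]
    exact Finset.single_le_sum (fun k _ => sq_nonneg (x k)) (Finset.mem_univ i)
  have hxx : ∀ i j, |x i * x j| ≤ x ⬝ᵥ x := by
    intro i j
    rw [abs_mul]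
    calc |x i| * |x j| ≤ (|x i| ^ 2 + |x j| ^ 2) / 2 := by nlinarith [sq_nonneg (|x i| - |x j|)]
    _ ≤ x ⬝ᵥ x := by
        have h1 := hS i; have h2 := hS j
        rw [sq_abs, sq_abs]; linarith
  calc x ⬝ᵥ P *ᵥ x = ∑ i, ∑ j, x i * (P i j * x j) := by
        simp [dotProduct, mulVec, Finset.mul_sum]
  _ ≤ ∑ i, ∑ j, |P i j| * (x ⬝ᵥ x) := by
      refine Finset.sum_le_sum fun i _ => Finset.sum_le_sum fun j _ => ?_
      calc x i * (P i j * x j) ≤ |x i * (P i j * x j)| := le_abs_self _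
      _ = |P i j| * |x i * x j| := by rw [abs_mul, abs_mul, abs_mul]; ring
      _ ≤ |P i j| * (x ⬝ᵥ x) := by
          exact mul_le_mul_of_nonneg_left (hxx i j) (abs_nonneg _)
  _ = (∑ i, ∑ j, |P i j|) * (x ⬝ᵥ x) := by rw [Finset.sum_mul]; simp [Finset.sum_mul]

theorem lyapunov_strict_decrease (n : ℕ)
    (Acl P : Matrix (Fin n) (Fin n) ℝ)
    (hP : P.PosDef) (hPI : (P - 1).PosSemidef)
    (hlmi : (P - 1 - Acl * P * Aclᵀ).PosSemidef) :
    (P⁻¹ - Aclᵀ * P⁻¹ * Acl).PosDef := by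
  -- upper bound constant
  set c : ℝ := (∑ i, ∑ j, |P i j|) + 2 with hc_def
  have hsum_nonneg : 0 ≤ ∑ i, ∑ j, |P i j| :=
    Finset.sum_nonneg fun i _ => Finset.sum_nonneg fun j _ => abs_nonneg _
  have hc2 : (2 : ℝ) ≤ c := by simp [hc_def]; linarith
  have hc0 : (0 : ℝ) < c := by linarith
  set t : ℝ := 1 - 1 / c with ht_def
  have ht0 : 0 < t := by
    have : 1 / c ≤ 1 / 2 := by
      apply one_div_le_one_div_of_le <;> linarith
    simp only [ht_def]; linarith
  have ht1 : t < 1 := by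
    have : 0 < 1 / c := by positivity
    simp only [ht_def]; linarith
  -- P ⪯ c • 1
  have hPc : ((c : ℝ) • (1 : Matrix (Fin n) (Fin n) ℝ) - P).PosSemidef := by
    refine posSemidef_iff_dotProduct_mulVec.mpr ⟨?_, fun x => ?_⟩
    · show _ = _
      rw [conjTranspose_sub, conjTranspose_smul, star_trivial, conjTranspose_one, hP.1]
    · simp only [star_trivial]
      rw [sub_mulVec, dotProduct_sub, smul_mulVec, one_mulVec, dotProduct_smul]
      have := quad_bound P x
      have hle : (∑ i, ∑ j, |P i j|) ≤ c := by simp [hc_def]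
      have hxx : 0 ≤ x ⬝ᵥ x := Finset.sum_nonneg fun k _ => mul_self_nonneg (x k)
      have : x ⬝ᵥ P *ᵥ x ≤ c * (x ⬝ᵥ x) :=
        le_trans this (mul_le_mul_of_nonneg_right hle hxx)
      simp only [smul_eq_mul]; linarith
  -- t • P - Acl P Aclᵀ ⪰ 0
  have hAPA : (t • P - Acl * P * Aclᵀ).PosSemidef := by
    have h1 : ((1 / c) • ((c : ℝ) • (1 : Matrix (Fin n) (Fin n) ℝ) - P)).PosSemidef :=
      psd_smul hPc (by positivity)
    have h2 := hlmi.add h1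
    have : P - 1 - Acl * P * Aclᵀ + (1 / c) • ((c : ℝ) • (1 : Matrix (Fin n) (Fin n) ℝ) - P)
        = t • P - Acl * P * Aclᵀ := by
      rw [ht_def, smul_sub, smul_smul]
      rw [one_div, inv_mul_cancel₀ (ne_of_gt hc0)]
      module
    rwa [this] at h2
  -- invertibility facts
  have hPinv : (P⁻¹).PosDef := hP.inv
  have hdet : IsUnit P.det := isUnit_iff_ne_zero.mpr (ne_of_gt hP.det_pos)
  haveI : Invertible P := P.invertibleOfIsUnitDet hdet
  have htPinv : (t • P⁻¹).PosDef := pd_smul hPinv ht0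
  haveI : Invertible (t • P⁻¹) := by
    apply (t • P⁻¹).invertibleOfIsUnitDet
    exact isUnit_iff_ne_zero.mpr (ne_of_gt htPinv.det_pos)
  have hinv_eq : (t • P⁻¹)⁻¹ = t⁻¹ • P := by
    apply inv_eq_right_inv
    rw [Matrix.smul_mul, Matrix.mul_smul, smul_smul, mul_inv_cancel₀ (ne_of_gt ht0),
      Matrix.nonsing_inv_mul P hdet, one_smul]
  -- the block matrix
  set M : Matrix (Fin n ⊕ Fin n) (Fin n ⊕ Fin n) ℝ := fromBlocks P Acl Aclᵀ (t • P⁻¹) with hM_def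
  have hAclH : Aclᴴ = Aclᵀ := conjTranspose_eq_transpose_of_trivial Acl
  -- M is PSD via Schur complement wrt the (2,2) block
  have hM : M.PosSemidef := by
    have hschur := PosDef.fromBlocks₂₂ P Acl htPinv
    rw [hAclH, hinv_eq] at hschur
    rw [hM_def]
    apply hschur.mpr
    have : P - Acl * (t⁻¹ • P) * Aclᵀ = t⁻¹ • (t • P - Acl * P * Aclᵀ) := by
      rw [smul_sub, smul_smul, inv_mul_cancel₀ (ne_of_gt ht0), one_smul]
      rw [Matrix.mul_smul, Matrix.smul_mul]
    rw [this]
    exact psd_smul hAPA (le_of_lt (inv_pos.mpr ht0))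
  -- Schur complement wrt the (1,1) block
  have hkey : (t • P⁻¹ - Aclᵀ * P⁻¹ * Acl).PosSemidef := by
    have hschur := PosDef.fromBlocks₁₁ Acl (t • P⁻¹) hP
    rw [hAclH] at hschur
    exact hschur.mp hM
  -- conclude
  have hfinal : (t • P⁻¹ - Aclᵀ * P⁻¹ * Acl + (1 - t) • P⁻¹).PosDef :=
    Matrix.PosDef.posSemidef_add hkey (pd_smul hPinv (by linarith))
  have : t • P⁻¹ - Aclᵀ * P⁻¹ * Acl + (1 - t) • P⁻¹ = P⁻¹ - Aclᵀ * P⁻¹ * Acl := by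
    module
  rwa [this] at hfinal
end

section
/- Let A_cl, P ∈ ℝ^{n×n} with P symmetric and P ≻ I, and suppose A_cl P A_clᵀ − P + I ⪯ 0. Then A_clᵀ P⁻¹ A_cl − P⁻¹ ⪯ −λ_min(P⁻¹) · P⁻¹. -/
open Matrix

/-- Cauchy–Schwarz for the real dot product. -/
lemma dp_cauchy_schwarz {n : ℕ} (x y : Fin n → ℝ) :
    (x ⬝ᵥ y) ^ 2 ≤ (x ⬝ᵥ x) * (y ⬝ᵥ y) := by
  simpa [dotProduct, sq] using Finset.sum_mul_sq_le_sq_mul_sq Finset.univ x y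

lemma dp_self_nonneg {n : ℕ} (x : Fin n → ℝ) : 0 ≤ x ⬝ᵥ x := by
  simpa using dotProduct_star_self_nonneg x

lemma dp_helper1 {n : ℕ} (B : Matrix (Fin n) (Fin n) ℝ) (x y : Fin n → ℝ) :
    x ⬝ᵥ (Bᵀ *ᵥ y) = (B *ᵥ x) ⬝ᵥ y := by
  rw [dotProduct_mulVec, Matrix.vecMul_transpose]

/-- Quadratic form of `c•1 - Bᵀ*B`. -/
lemma qf1 {n : ℕ} (B : Matrix (Fin n) (Fin n) ℝ) (c : ℝ) (x : Fin n → ℝ) :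
    x ⬝ᵥ ((c • 1 - Bᵀ * B) *ᵥ x) = c * (x ⬝ᵥ x) - (B *ᵥ x) ⬝ᵥ (B *ᵥ x) := by
  rw [Matrix.sub_mulVec, dotProduct_sub, Matrix.smul_mulVec, Matrix.one_mulVec,
    dotProduct_smul, ← Matrix.mulVec_mulVec, dp_helper1]
  simp [smul_eq_mul]

/-- A real symmetric matrix dominates its smallest eigenvalue times the identity. -/
lemma sub_iInf_smul_one_posSemidef {n : ℕ} (M : Matrix (Fin n) (Fin n) ℝ)
    (hM : M.IsHermitian) :
    (M - (⨅ i, hM.eigenvalues i) • 1).PosSemidef := by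
  set l := ⨅ i, hM.eigenvalues i with hl
  have hnn : ∀ i, 0 ≤ hM.eigenvalues i - l := fun i =>
    sub_nonneg.2 (ciInf_le (Finite.bddBelow_range _) i)
  have hdiag : (Matrix.diagonal (fun i => hM.eigenvalues i - l)).PosSemidef :=
    Matrix.PosSemidef.diagonal hnn
  have h := hdiag.mul_mul_conjTranspose_same (hM.eigenvectorUnitary : Matrix (Fin n) (Fin n) ℝ)
  have key : (hM.eigenvectorUnitary : Matrix (Fin n) (Fin n) ℝ) *
      Matrix.diagonal (fun i => hM.eigenvalues i - l) *
      (hM.eigenvectorUnitary : Matrix (Fin n) (Fin n) ℝ)ᴴ = M - l • 1 := by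
    have hsd : Matrix.diagonal (fun i => hM.eigenvalues i - l)
        = Matrix.diagonal hM.eigenvalues - l • 1 := by
      rw [← Matrix.diagonal_sub]
      congr 1
      ext i
      simp [Matrix.one_apply, Matrix.diagonal_apply]
    have hU : (hM.eigenvectorUnitary : Matrix (Fin n) (Fin n) ℝ) *
        (hM.eigenvectorUnitary : Matrix (Fin n) (Fin n) ℝ)ᴴ = 1 := by
      simpa [Matrix.star_eq_conjTranspose] using
        (Matrix.mem_unitaryGroup_iff.mp hM.eigenvectorUnitary.2)
    have hspec := hM.spectral_theorem
    rw [hsd, Matrix.mul_sub, Matrix.sub_mul, Matrix.mul_smul, Matrix.smul_mul,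
      Matrix.mul_one, hU]
    congr 1
    simpa [Matrix.star_eq_conjTranspose, Function.comp] using hspec.symm
  rwa [key] at h

/-- If `c•1 - B*Bᵀ ⪰ 0` then `c•1 - Bᵀ*B ⪰ 0` (real case). -/
lemma flip_posSemidef {n : ℕ} (B : Matrix (Fin n) (Fin n) ℝ) (c : ℝ) (hc : 0 ≤ c)
    (h : (c • 1 - B * Bᵀ).PosSemidef) : (c • 1 - Bᵀ * B).PosSemidef := by
  refine Matrix.PosSemidef.of_dotProduct_mulVec_nonneg ?_ ?_
  · show (c • 1 - Bᵀ * B)ᴴ = _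
    simp [Matrix.conjTranspose_eq_transpose_of_trivial, Matrix.transpose_mul,
      Matrix.transpose_smul, Matrix.conjTranspose_sub]
  · intro x
    have hy := h.dotProduct_mulVec_nonneg (B *ᵥ x)
    have e2 : ∀ y : Fin n → ℝ, y ⬝ᵥ ((c • 1 - B * Bᵀ) *ᵥ y)
        = c * (y ⬝ᵥ y) - (Bᵀ *ᵥ y) ⬝ᵥ (Bᵀ *ᵥ y) := by
      intro y
      have := qf1 Bᵀ c y
      rwa [Matrix.transpose_transpose] at this
    rw [star_trivial, e2] at hy
    rw [star_trivial, qf1]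
    set t : ℝ := (B *ᵥ x) ⬝ᵥ (B *ᵥ x) with ht
    set s : ℝ := x ⬝ᵥ x with hs
    set u : Fin n → ℝ := Bᵀ *ᵥ (B *ᵥ x) with hu
    have ht0 : 0 ≤ t := dp_self_nonneg _
    have hs0 : 0 ≤ s := dp_self_nonneg _
    have hu0 : 0 ≤ u ⬝ᵥ u := dp_self_nonneg _
    have hxu : x ⬝ᵥ u = t := by
      rw [hu, dp_helper1, ht]
    have hcs : (x ⬝ᵥ u) ^ 2 ≤ s * (u ⬝ᵥ u) := dp_cauchy_schwarz x u
    rw [hxu] at hcs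
    rcases eq_or_lt_of_le ht0 with h0 | h0
    · rw [← h0, sub_zero]
      exact mul_nonneg hc hs0
    · nlinarith [hcs, hy, mul_le_mul_of_nonneg_left (sub_nonneg.mp hy) hs0]

theorem lyapunov_geometric_decrease (n : ℕ)
    (Acl P : Matrix (Fin n) (Fin n) ℝ)
    (hP : P.IsHermitian) (hPI : (P - 1).PosDef)
    (hlmi : (P - 1 - Acl * P * Aclᵀ).PosSemidef)
    (hPinv : (P⁻¹).IsHermitian) :
    ((1 - ⨅ i, hPinv.eigenvalues i) • P⁻¹ - Aclᵀ * P⁻¹ * Acl).PosSemidef := by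
  rcases Nat.eq_zero_or_pos n with hn | hn
  · subst hn
    have : ((1 - ⨅ i, hPinv.eigenvalues i) • P⁻¹ - Aclᵀ * P⁻¹ * Acl) = 0 := by
      ext i j; exact i.elim0
    rw [this]; exact Matrix.PosSemidef.zero
  -- P is positive definite
  have hPd : P.PosDef := by
    have h := hPI.add (Matrix.PosDef.one (n := Fin n) (R := ℝ))
    simpa using h
  have hPinvPD : (P⁻¹).PosDef := hPd.inv
  set Q := (open scoped MatrixOrder in CFC.sqrt (P⁻¹)) with hQdef
  have hQps : Q.PosSemidef := (open scoped MatrixOrder in (CFC.sqrt_nonneg (P⁻¹)).posSemidef)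
  have hQQ : Q * Q = P⁻¹ :=
    (open scoped MatrixOrder in CFC.sqrt_mul_sqrt_self (P⁻¹) hPinvPD.posSemidef.nonneg)
  have hQT : Qᵀ = Q := by
    rw [← Matrix.conjTranspose_eq_transpose_of_trivial]
    exact hQps.isHermitian
  have hQdet : IsUnit Q.det := by
    rw [isUnit_iff_ne_zero]
    intro h0
    have : (P⁻¹).det = 0 := by rw [← hQQ, Matrix.det_mul, h0, mul_zero]
    exact hPinvPD.det_pos.ne' this
  have hQ1 : Q * Q⁻¹ = 1 := Matrix.mul_nonsing_inv Q hQdet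
  have h1Q : Q⁻¹ * Q = 1 := Matrix.nonsing_inv_mul Q hQdet
  have hQinvT : Q⁻¹ᵀ = Q⁻¹ := by rw [Matrix.transpose_nonsing_inv, hQT]
  have hPdet : IsUnit P.det := isUnit_iff_ne_zero.mpr hPd.det_pos.ne'
  have hPQ : P = Q⁻¹ * Q⁻¹ := by
    rw [← Matrix.mul_inv_rev, hQQ, Matrix.nonsing_inv_nonsing_inv P hPdet]
  set B := Q * Acl * Q⁻¹ with hBdef
  have hBT : Bᵀ = Q⁻¹ * Aclᵀ * Q := by
    rw [hBdef, Matrix.transpose_mul, Matrix.transpose_mul, hQT, hQinvT, Matrix.mul_assoc]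
  have cancel1 : ∀ X : Matrix (Fin n) (Fin n) ℝ, Q * (Q⁻¹ * X) = X := fun X => by
    rw [← Matrix.mul_assoc, hQ1, Matrix.one_mul]
  -- conjugate the LMI by Q
  have hB1 : (1 - P⁻¹ - B * Bᵀ).PosSemidef := by
    have h := hlmi.mul_mul_conjTranspose_same Q
    have e1 : Q * P * Q = 1 := by
      calc Q * P * Q = Q * (Q⁻¹ * Q⁻¹) * Q := by rw [← hPQ]
        _ = Q * (Q⁻¹ * (Q⁻¹ * Q)) := by simp only [Matrix.mul_assoc]
        _ = 1 := by rw [h1Q, Matrix.mul_one, hQ1]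
    have e2 : Q * (Acl * P * Aclᵀ) * Q = B * Bᵀ := by
      rw [hBT, hBdef, hPQ]
      simp only [Matrix.mul_assoc]
    have key : Q * (P - 1 - Acl * P * Aclᵀ) * Qᴴ = 1 - P⁻¹ - B * Bᵀ := by
      rw [Matrix.conjTranspose_eq_transpose_of_trivial, hQT,
        Matrix.mul_sub, Matrix.mul_sub, Matrix.sub_mul, Matrix.sub_mul,
        Matrix.mul_one, e1, hQQ, e2]
    rwa [key] at h
  -- smallest eigenvalue bound
  set l := ⨅ i, hPinv.eigenvalues i with hl
  have hA : (P⁻¹ - l • 1).PosSemidef := sub_iInf_smul_one_posSemidef _ hPinv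
  have hc1 : ((1 - l) • 1 - B * Bᵀ).PosSemidef := by
    have h := hB1.add hA
    have e : (1 - P⁻¹ - B * Bᵀ) + (P⁻¹ - l • 1) = (1 - l) • 1 - B * Bᵀ := by
      rw [sub_smul, one_smul]
      abel
    rwa [e] at h
  -- 1 - l ≥ 0
  have hc : 0 ≤ 1 - l := by
    obtain ⟨i0⟩ := Fin.pos_iff_nonempty.mp hn
    set x : Fin n → ℝ := Pi.single i0 1 with hx
    have hxx : x ⬝ᵥ x = 1 := by simp [hx, dotProduct, Pi.single_apply]
    have h := hc1.dotProduct_mulVec_nonneg x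
    have e2 := qf1 Bᵀ (1 - l) x
    rw [Matrix.transpose_transpose] at e2
    rw [star_trivial, e2, hxx, mul_one] at h
    have := dp_self_nonneg (Bᵀ *ᵥ x)
    linarith
  have hc2 : ((1 - l) • 1 - Bᵀ * B).PosSemidef := flip_posSemidef B (1 - l) hc hc1
  -- conjugate back by Q
  have h := hc2.mul_mul_conjTranspose_same Q
  have e3 : Q * (Bᵀ * B) * Q = Aclᵀ * P⁻¹ * Acl := by
    rw [hBT, hBdef, ← hQQ]
    simp only [Matrix.mul_assoc, h1Q, Matrix.mul_one, cancel1]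
  have key : Q * ((1 - l) • 1 - Bᵀ * B) * Qᴴ = (1 - l) • P⁻¹ - Aclᵀ * P⁻¹ * Acl := by
    rw [Matrix.conjTranspose_eq_transpose_of_trivial, hQT,
      Matrix.mul_sub, Matrix.sub_mul, Matrix.mul_smul, Matrix.mul_one, Matrix.smul_mul,
      hQQ, e3]
  rwa [key] at h
end
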